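/- arXiv:0903.0518 — 3 statements merged into one kernel-verified Lean document; each statement's English description precedes it below -/
import Mathlib

section
/- Fix b > 0, N ≥ 1/(2b), and μ > 0. Let B₀, B₁ ⊆ [−N, N] be symmetric Borel sets with Lebesgue measure λ(B₀) = λ(B₁) = 1/b, let Y₀ and Y₁ be independent random variables with densities b·1_{B₀} and b·1_{B₁} respectively, and let U₀ and U₁ be independent random variables each uniformly distributed on (−1/(2b), 1/(2b)). Then P(|Y₀ − Y₁| < μ) ≤ P(|U₀ − U₁| < μ). -/
open MeasureTheory ProbabilityTheory
open scoped ENNReal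

section Stmt15Aux

open Set
open scoped ENNReal

private lemma ind_pre' (B : Set ℝ) (g : ℝ → ℝ) (x : ℝ) :
    (g ⁻¹' B).indicator (1 : ℝ → ℝ≥0∞) x = B.indicator 1 (g x) := by
  by_cases h : g x ∈ B <;> simp [Set.indicator, h, mem_preimage]

private lemma strip_meas' (μ : ℝ) : MeasurableSet {p : ℝ × ℝ | |p.1 - p.2| < μ} := by
  have : {p : ℝ × ℝ | |p.1 - p.2| < μ} = (fun p : ℝ × ℝ => |p.1 - p.2|) ⁻¹' Iio μ := rfl
  rw [this]
  exact ((measurable_fst.sub measurable_snd).abs) measurableSet_Iio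

private lemma core_repr' (A B : Set ℝ) (hA : MeasurableSet A) (hB : MeasurableSet B) (μ : ℝ) :
    (volume.restrict A).prod (volume.restrict B) {p : ℝ × ℝ | |p.1 - p.2| < μ}
      = ∫⁻ t in Ioo (-μ) μ, volume (A ∩ (fun x => x - t) ⁻¹' B) := by
  rw [Measure.prod_apply (strip_meas' μ)]
  have h1 : ∀ x : ℝ, (Prod.mk x ⁻¹' {p : ℝ × ℝ | |p.1 - p.2| < μ}) = Ioo (x - μ) (x + μ) := by
    intro x; ext y
    simp only [mem_preimage, mem_setOf_eq, mem_Ioo, abs_lt]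
    constructor
    · rintro ⟨h1, h2⟩; constructor <;> linarith
    · rintro ⟨h1, h2⟩; constructor <;> linarith
  have hmx : ∀ x : ℝ, MeasurableSet ((fun t : ℝ => x - t) ⁻¹' B) :=
    fun x => (measurable_const.sub measurable_id') hB
  have h2 : ∀ x : ℝ, (volume.restrict B) (Ioo (x - μ) (x + μ))
      = (volume.restrict (Ioo (-μ) μ)) ((fun t => x - t) ⁻¹' B) := by
    intro x
    rw [Measure.restrict_apply measurableSet_Ioo, Measure.restrict_apply (hmx x)]
    have hpre : (fun t : ℝ => x - t) ⁻¹' (Ioo (x - μ) (x + μ) ∩ B)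
        = (fun t : ℝ => x - t) ⁻¹' B ∩ Ioo (-μ) μ := by
      ext t
      simp only [mem_preimage, mem_inter_iff, mem_Ioo]
      constructor
      · rintro ⟨⟨a1, a2⟩, hb⟩; exact ⟨hb, by linarith, by linarith⟩
      · rintro ⟨hb, a1, a2⟩; exact ⟨⟨by linarith, by linarith⟩, hb⟩
    rw [← (Measure.measurePreserving_sub_left volume x).measure_preimage
      ((measurableSet_Ioo.inter hB).nullMeasurableSet), hpre]
  simp_rw [h1, h2]
  have h3 : ∀ x : ℝ, (volume.restrict (Ioo (-μ) μ)) ((fun t => x - t) ⁻¹' B)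
      = ∫⁻ t in Ioo (-μ) μ, B.indicator 1 (x - t) := by
    intro x
    rw [← lintegral_indicator_one (hmx x)]
    simp_rw [ind_pre' B (fun t => x - t)]
  simp_rw [h3]
  rw [lintegral_lintegral_swap]
  · congr 1
    ext t
    have h4 : ∀ x : ℝ, B.indicator (1 : ℝ → ℝ≥0∞) (x - t)
        = ((fun x : ℝ => x - t) ⁻¹' B).indicator 1 x := fun x => (ind_pre' B (fun x => x - t) x).symm
    simp_rw [h4]
    rw [lintegral_indicator_one (show MeasurableSet ((fun x : ℝ => x - t) ⁻¹' B) from (measurable_id'.sub measurable_const) hB),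
      Measure.restrict_apply (show MeasurableSet ((fun x : ℝ => x - t) ⁻¹' B) from (measurable_id'.sub measurable_const) hB), inter_comm]
  · exact ((measurable_one.indicator hB).comp (measurable_fst.sub measurable_snd)).aemeasurable

private lemma core_total' (A B : Set ℝ) (hA : MeasurableSet A) (hB : MeasurableSet B) :
    ∫⁻ t, volume (A ∩ (fun x => x - t) ⁻¹' B) = volume A * volume B := by
  have hmx : ∀ t : ℝ, MeasurableSet ((fun x : ℝ => x - t) ⁻¹' B) :=
    fun t => (measurable_id'.sub measurable_const) hB
  have h1 : ∀ t : ℝ, volume (A ∩ (fun x => x - t) ⁻¹' B)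
      = ∫⁻ x in A, B.indicator 1 (x - t) := by
    intro t
    rw [inter_comm, ← Measure.restrict_apply (hmx t), ← lintegral_indicator_one (hmx t)]
    simp_rw [ind_pre' B (fun x => x - t)]
  simp_rw [h1]
  rw [lintegral_lintegral_swap]
  · have h2 : ∀ x : ℝ, ∫⁻ t, B.indicator (1 : ℝ → ℝ≥0∞) (x - t) = volume B := by
      intro x
      have h4 : ∀ t : ℝ, B.indicator (1 : ℝ → ℝ≥0∞) (x - t)
          = ((fun t : ℝ => x - t) ⁻¹' B).indicator 1 t :=
        fun t => (ind_pre' B (fun t => x - t) t).symm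
      simp_rw [h4]
      rw [lintegral_indicator_one (show MeasurableSet ((fun t : ℝ => x - t) ⁻¹' B) from (measurable_const.sub measurable_id') hB)]
      exact (Measure.measurePreserving_sub_left volume x).measure_preimage
        hB.nullMeasurableSet
    simp_rw [h2]
    rw [setLIntegral_const, mul_comm]
  · exact ((measurable_one.indicator hB).comp
      (measurable_snd.sub measurable_fst)).aemeasurable

private lemma exists_cut' (A : Set ℝ) (N₀ : ℝ) (hsub₀ : A ⊆ Icc (-N₀) N₀)
    (m : ℝ) (hm0 : 0 ≤ m) (hm : ENNReal.ofReal m ≤ volume A) :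
    ∃ a : ℝ, volume (A ∩ Iio a) = ENNReal.ofReal m := by
  set N : ℝ := |N₀| with hNdef
  have hsub : A ⊆ Icc (-N) N := by
    refine hsub₀.trans (Icc_subset_Icc ?_ ?_)
    · exact neg_le_neg (le_abs_self N₀)
    · exact le_abs_self N₀
  have hAfin : volume A < ⊤ :=
    lt_of_le_of_lt (measure_mono hsub) (by rw [Real.volume_Icc]; exact ENNReal.ofReal_lt_top)
  have hfin : ∀ a : ℝ, volume (A ∩ Iio a) ≠ ⊤ :=
    fun a => (lt_of_le_of_lt (measure_mono inter_subset_left) hAfin).ne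
  set F : ℝ → ℝ := fun a => (volume (A ∩ Iio a)).toReal with hF
  have hmono : ∀ ⦃a a' : ℝ⦄, a ≤ a' → F a ≤ F a' := by
    intro a a' h
    exact ENNReal.toReal_mono (hfin a') (measure_mono (inter_subset_inter_right _ (Iio_subset_Iio h)))
  have hlip : ∀ ⦃a a' : ℝ⦄, a ≤ a' → F a' ≤ F a + (a' - a) := by
    intro a a' h
    have hsub2 : A ∩ Iio a' ⊆ (A ∩ Iio a) ∪ Ico a a' := by
      rintro x ⟨hxA, hx⟩
      rcases lt_or_ge x a with h1 | h1
      · exact Or.inl ⟨hxA, h1⟩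
      · exact Or.inr ⟨h1, hx⟩
    have : volume (A ∩ Iio a') ≤ volume (A ∩ Iio a) + ENNReal.ofReal (a' - a) := by
      refine le_trans (measure_mono hsub2) (le_trans (measure_union_le _ _) ?_)
      rw [Real.volume_Ico]
    calc F a' ≤ ((volume (A ∩ Iio a)) + ENNReal.ofReal (a' - a)).toReal :=
          ENNReal.toReal_mono (ENNReal.add_ne_top.mpr ⟨hfin a, ENNReal.ofReal_ne_top⟩) this
      _ = F a + (a' - a) := by
          rw [ENNReal.toReal_add (hfin a) ENNReal.ofReal_ne_top,
            ENNReal.toReal_ofReal (by linarith)]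
  have hcont : Continuous F := by
    apply (LipschitzWith.of_dist_le_mul (K := 1) ?_).continuous
    intro a a'
    rw [NNReal.coe_one, one_mul, Real.dist_eq, Real.dist_eq]
    rcases le_total a a' with h | h
    · rw [abs_sub_comm (F a)]
      rw [abs_of_nonneg (by linarith [hmono h]), abs_of_nonpos (by linarith)]
      linarith [hlip h]
    · rw [abs_of_nonneg (by linarith [hmono h]), abs_of_nonneg (by linarith)]
      linarith [hlip h]
  have hlow : F (-N) = 0 := by
    have : A ∩ Iio (-N) = ∅ := by
      ext x
      simp only [mem_inter_iff, mem_Iio, mem_empty_iff_false, iff_false, not_and, not_lt]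
      exact fun hx => (hsub hx).1
    rw [hF]; simp [this]
  have hhigh : m ≤ F (N + 1) := by
    have : A ∩ Iio (N + 1) = A := by
      apply inter_eq_self_of_subset_left
      exact fun x hx => lt_of_le_of_lt (hsub hx).2 (by linarith)
    rw [hF]; simp only [this]
    rw [← ENNReal.toReal_ofReal hm0]
    exact ENNReal.toReal_mono hAfin.ne hm
  have hNN : (-N : ℝ) ≤ N + 1 := by
    have : (0:ℝ) ≤ N := abs_nonneg N₀
    linarith
  obtain ⟨a, -, ha⟩ := intermediate_value_Icc hNN hcont.continuousOn
    ⟨by rw [hlow]; exact hm0, hhigh⟩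
  exact ⟨a, by rw [← ha]; exact (ENNReal.ofReal_toReal (hfin a)).symm⟩

private lemma strip_bound' (A B : Set ℝ) (hA : MeasurableSet A) (hB : MeasurableSet B)
    (N : ℝ) (hAsub : A ⊆ Icc (-N) N) (hBsub : B ⊆ Icc (-N) N)
    (L μ : ℝ) (hμ : 0 < μ) (hμL : μ ≤ L)
    (hAvol : volume A = ENNReal.ofReal L) (hBvol : volume B = ENNReal.ofReal L) :
    (volume.restrict A).prod (volume.restrict B) {p : ℝ × ℝ | |p.1 - p.2| < μ}
      ≤ ENNReal.ofReal (2 * μ * L - μ ^ 2) := by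
  have hμ0 : (0:ℝ) ≤ μ := hμ.le
  have hLμ : (0:ℝ) ≤ L - μ := by linarith
  obtain ⟨a, ha⟩ := exists_cut' A N hAsub μ hμ0 (by rw [hAvol]; exact ENNReal.ofReal_le_ofReal hμL)
  obtain ⟨c, hc⟩ := exists_cut' B N hBsub μ hμ0 (by rw [hBvol]; exact ENNReal.ofReal_le_ofReal hμL)
  set A' : Set ℝ := A ∩ Iio a with hA'def
  set B' : Set ℝ := B ∩ Iio c with hB'def
  set TA : Set ℝ := A \ Iio a with hTAdef
  set TB : Set ℝ := B \ Iio c with hTBdef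
  have hA' : MeasurableSet A' := hA.inter measurableSet_Iio
  have hB' : MeasurableSet B' := hB.inter measurableSet_Iio
  have hTA : MeasurableSet TA := hA.diff measurableSet_Iio
  have hTB : MeasurableSet TB := hB.diff measurableSet_Iio
  have hTAvol : volume TA = ENNReal.ofReal (L - μ) := by
    have hsplit : volume A' + volume TA = volume A :=
      measure_inter_add_diff A measurableSet_Iio
    rw [ha, hAvol] at hsplit
    rw [ENNReal.ofReal_sub L hμ0]
    rw [← hsplit, ENNReal.add_sub_cancel_left ENNReal.ofReal_ne_top]
  have hTBvol : volume TB = ENNReal.ofReal (L - μ) := by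
    have hsplit : volume B' + volume TB = volume B :=
      measure_inter_add_diff B measurableSet_Iio
    rw [hc, hBvol] at hsplit
    rw [ENNReal.ofReal_sub L hμ0]
    rw [← hsplit, ENNReal.add_sub_cancel_left ENNReal.ofReal_ne_top]
  have hpoint : ∀ t : ℝ, volume (A ∩ (fun x => x - t) ⁻¹' B)
      ≤ ENNReal.ofReal (L - μ) + volume (A' ∩ (fun x => x - t) ⁻¹' B') := by
    intro t
    rcases le_or_gt t (a - c) with hcase | hcase
    · have hincl : A ∩ (fun x => x - t) ⁻¹' B
          ⊆ ((fun x : ℝ => x - t) ⁻¹' TB) ∪ (A' ∩ (fun x => x - t) ⁻¹' B') := by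
        rintro x ⟨hxA, hxB⟩
        simp only [mem_preimage] at hxB
        by_cases hT : x - t ∈ Iio c
        · right
          refine ⟨⟨hxA, ?_⟩, ⟨hxB, hT⟩⟩
          by_contra hxa
          simp only [mem_Iio, not_lt] at hxa hT ⊢
          have : c ≤ x - t := by linarith
          exact absurd this (by simpa using hT)
        · left
          exact ⟨hxB, by simpa using hT⟩
      calc volume (A ∩ (fun x => x - t) ⁻¹' B)
          ≤ volume ((fun x : ℝ => x - t) ⁻¹' TB) + volume (A' ∩ (fun x => x - t) ⁻¹' B') :=
            le_trans (measure_mono hincl) (measure_union_le _ _)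
        _ = ENNReal.ofReal (L - μ) + volume (A' ∩ (fun x => x - t) ⁻¹' B') := by
            rw [(measurePreserving_sub_right volume t).measure_preimage
              hTB.nullMeasurableSet, hTBvol]
    · have hincl : A ∩ (fun x => x - t) ⁻¹' B
          ⊆ TA ∪ (A' ∩ (fun x => x - t) ⁻¹' B') := by
        rintro x ⟨hxA, hxB⟩
        simp only [mem_preimage] at hxB
        by_cases hxa : x ∈ Iio a
        · right
          refine ⟨⟨hxA, hxa⟩, ⟨hxB, ?_⟩⟩
          simp only [mem_Iio] at hxa ⊢
          linarith
        · left; exact ⟨hxA, hxa⟩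
      calc volume (A ∩ (fun x => x - t) ⁻¹' B)
          ≤ volume TA + volume (A' ∩ (fun x => x - t) ⁻¹' B') :=
            le_trans (measure_mono hincl) (measure_union_le _ _)
        _ = ENNReal.ofReal (L - μ) + volume (A' ∩ (fun x => x - t) ⁻¹' B') := by rw [hTAvol]
  rw [core_repr' A B hA hB μ]
  calc ∫⁻ t in Ioo (-μ) μ, volume (A ∩ (fun x => x - t) ⁻¹' B)
      ≤ ∫⁻ t in Ioo (-μ) μ,
          (ENNReal.ofReal (L - μ) + volume (A' ∩ (fun x => x - t) ⁻¹' B')) :=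
        lintegral_mono fun t => hpoint t
    _ = ENNReal.ofReal (L - μ) * volume (Ioo (-μ) μ)
          + ∫⁻ t in Ioo (-μ) μ, volume (A' ∩ (fun x => x - t) ⁻¹' B') := by
        rw [lintegral_add_left measurable_const, setLIntegral_const]
    _ ≤ ENNReal.ofReal (L - μ) * ENNReal.ofReal (2 * μ)
          + ∫⁻ t, volume (A' ∩ (fun x => x - t) ⁻¹' B') := by
        gcongr
        · rw [Real.volume_Ioo]
          apply ENNReal.ofReal_le_ofReal; linarith
        · exact Measure.restrict_le_self
    _ = ENNReal.ofReal (L - μ) * ENNReal.ofReal (2 * μ)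
          + ENNReal.ofReal μ * ENNReal.ofReal μ := by
        rw [core_total' A' B' hA' hB', ha, hc]
    _ = ENNReal.ofReal (2 * μ * L - μ ^ 2) := by
        rw [← ENNReal.ofReal_mul hLμ, ← ENNReal.ofReal_mul hμ0,
          ← ENNReal.ofReal_add (by nlinarith) (by nlinarith)]
        congr 1; ring

private lemma abs_int' (r : ℝ) (hr : 0 ≤ r) : ∫ t in (-r)..r, |t| = r ^ 2 := by
  have hsplit := intervalIntegral.integral_add_adjacent_intervals
    (μ := volume) (a := -r) (b := 0) (c := r) (f := fun t => |t|)
    (continuous_abs.intervalIntegrable _ _) (continuous_abs.intervalIntegrable _ _)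
  have h1 : ∫ t in (-r)..(0:ℝ), |t| = r ^ 2 / 2 := by
    rw [intervalIntegral.integral_congr (g := fun t => -t) ?_]
    · rw [intervalIntegral.integral_neg, integral_id]
      ring
    · intro t ht
      rw [uIcc_of_le (by linarith)] at ht
      exact abs_of_nonpos ht.2
  have h2 : ∫ t in (0:ℝ)..r, |t| = r ^ 2 / 2 := by
    rw [intervalIntegral.integral_congr (g := fun t => t) ?_]
    · rw [integral_id]; ring
    · intro t ht
      rw [uIcc_of_le (by linarith)] at ht
      exact abs_of_nonneg ht.1
  rw [h1, h2] at hsplit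
  rw [← hsplit]; ring

private lemma unif_lower' (c r : ℝ) (hr : 0 < r) (hrL : r ≤ 2 * c) :
    ENNReal.ofReal (2 * r * (2 * c) - r ^ 2)
      ≤ (volume.restrict (Ioo (-c) c)).prod (volume.restrict (Ioo (-c) c))
          {p : ℝ × ℝ | |p.1 - p.2| < r} := by
  rw [core_repr' _ _ measurableSet_Ioo measurableSet_Ioo]
  have hpt : ∀ t ∈ Ioo (-r) r,
      volume (Ioo (-c) c ∩ (fun x => x - t) ⁻¹' Ioo (-c) c) = ENNReal.ofReal (2 * c - |t|) := by
    intro t ht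
    have hpre : (fun x : ℝ => x - t) ⁻¹' Ioo (-c) c = Ioo (t - c) (t + c) := by
      ext x
      simp only [mem_preimage, mem_Ioo]
      constructor
      · rintro ⟨h1, h2⟩; constructor <;> linarith
      · rintro ⟨h1, h2⟩; constructor <;> linarith
    rw [hpre, Ioo_inter_Ioo, Real.volume_Ioo]
    congr 1
    simp only [mem_Ioo] at ht
    obtain ⟨ht1, ht2⟩ := ht
    rcases le_total 0 t with h | h
    · rw [abs_of_nonneg h, max_eq_right (by linarith), min_eq_left (by linarith)]
      ring
    · rw [abs_of_nonpos h, max_eq_left (by linarith), min_eq_right (by linarith)]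
      ring
  rw [setLIntegral_congr_fun measurableSet_Ioo hpt]
  have hint : ∫⁻ t in Ioo (-r) r, ENNReal.ofReal (2 * c - |t|)
      = ENNReal.ofReal (∫ t in Ioo (-r) r, (2 * c - |t|)) := by
    rw [← ofReal_integral_eq_lintegral_ofReal]
    · exact ((continuous_const.sub continuous_abs).integrableOn_Icc).mono_set
        Ioo_subset_Icc_self
    · filter_upwards [self_mem_ae_restrict measurableSet_Ioo] with t ht
      simp only [mem_Ioo] at ht
      have habs : |t| < r := abs_lt.mpr ht
      simp only [Pi.zero_apply]
      linarith
  rw [hint]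
  apply ENNReal.ofReal_le_ofReal
  have hioc : ∫ t in Ioo (-r) r, (2 * c - |t|) = ∫ t in (-r)..r, (2 * c - |t|) := by
    rw [intervalIntegral.integral_of_le (by linarith), integral_Ioc_eq_integral_Ioo]
  rw [hioc, intervalIntegral.integral_sub (intervalIntegrable_const)
    (continuous_abs.intervalIntegrable _ _), abs_int' r hr.le,
    intervalIntegral.integral_const]
  simp only [smul_eq_mul]
  nlinarith

private lemma prod_smul_apply' (d d' : ℝ≥0∞) (hd' : d' ≠ ⊤) (m₁ m₂ : Measure ℝ)
    [SFinite m₁] [SFinite m₂] (S : Set (ℝ × ℝ)) (hS : MeasurableSet S) :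
    ((d • m₁).prod (d' • m₂)) S = d * d' * (m₁.prod m₂) S := by
  rw [Measure.prod_apply hS, Measure.prod_apply hS, lintegral_smul_measure]
  simp_rw [Measure.smul_apply, smul_eq_mul]
  rw [lintegral_const_mul' _ _ hd']
  ring

end Stmt15Aux

theorem stmt_15 {Ω : Type*} {mΩ : MeasurableSpace Ω} (P : Measure Ω)
    [IsProbabilityMeasure P] (b N μ : ℝ) (hb : 0 < b) (hN : 1 / (2 * b) ≤ N)
    (hμ : 0 < μ) (B₀ B₁ : Set ℝ) (hB₀ : MeasurableSet B₀) (hB₁ : MeasurableSet B₁)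
    (hB₀sub : B₀ ⊆ Set.Icc (-N) N) (hB₁sub : B₁ ⊆ Set.Icc (-N) N)
    (hB₀symm : B₀ = -B₀) (hB₁symm : B₁ = -B₁)
    (hB₀vol : volume B₀ = ENNReal.ofReal (1 / b))
    (hB₁vol : volume B₁ = ENNReal.ofReal (1 / b))
    (Y₀ Y₁ U₀ U₁ : Ω → ℝ)
    (hY₀ : Measurable Y₀) (hY₁ : Measurable Y₁)
    (hU₀ : Measurable U₀) (hU₁ : Measurable U₁)
    (hYindep : IndepFun Y₀ Y₁ P) (hUindep : IndepFun U₀ U₁ P)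
    (hY₀law : P.map Y₀ = ENNReal.ofReal b • volume.restrict B₀)
    (hY₁law : P.map Y₁ = ENNReal.ofReal b • volume.restrict B₁)
    (hU₀law : P.map U₀ = ENNReal.ofReal b •
      volume.restrict (Set.Ioo (-(1 / (2 * b))) (1 / (2 * b))))
    (hU₁law : P.map U₁ = ENNReal.ofReal b •
      volume.restrict (Set.Ioo (-(1 / (2 * b))) (1 / (2 * b)))) :
    P {ω | |Y₀ ω - Y₁ ω| < μ} ≤ P {ω | |U₀ ω - U₁ ω| < μ} := by
  classical
  set L : ℝ := 1 / b with hLdef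
  set c : ℝ := 1 / (2 * b) with hcdef
  have hL : 0 < L := by positivity
  have hc : 0 < c := by positivity
  have h2c : 2 * c = L := by
    rw [hcdef, hLdef]; field_simp
  set S : Set (ℝ × ℝ) := {p : ℝ × ℝ | |p.1 - p.2| < μ} with hSdef
  have hS : MeasurableSet S := strip_meas' μ
  set I : Set ℝ := Set.Ioo (-c) c with hIdef
  -- LHS as product measure
  have hpairY : P.map (fun ω => (Y₀ ω, Y₁ ω)) = (P.map Y₀).prod (P.map Y₁) :=
    (indepFun_iff_map_prod_eq_prod_map_map hY₀.aemeasurable hY₁.aemeasurable).mp hYindep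
  have hpairU : P.map (fun ω => (U₀ ω, U₁ ω)) = (P.map U₀).prod (P.map U₁) :=
    (indepFun_iff_map_prod_eq_prod_map_map hU₀.aemeasurable hU₁.aemeasurable).mp hUindep
  have hLHS : P {ω | |Y₀ ω - Y₁ ω| < μ}
      = ((ENNReal.ofReal b • volume.restrict B₀).prod
          (ENNReal.ofReal b • volume.restrict B₁)) S := by
    have hset : {ω | |Y₀ ω - Y₁ ω| < μ} = (fun ω => (Y₀ ω, Y₁ ω)) ⁻¹' S := rfl
    rw [hset, ← Measure.map_apply (hY₀.prodMk hY₁) hS, hpairY, hY₀law, hY₁law]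
  have hRHS : P {ω | |U₀ ω - U₁ ω| < μ}
      = ((ENNReal.ofReal b • volume.restrict I).prod
          (ENNReal.ofReal b • volume.restrict I)) S := by
    have hset : {ω | |U₀ ω - U₁ ω| < μ} = (fun ω => (U₀ ω, U₁ ω)) ⁻¹' S := rfl
    rw [hset, ← Measure.map_apply (hU₀.prodMk hU₁) hS, hpairU, hU₀law, hU₁law]
  rcases le_or_gt μ L with hcase | hcase
  · -- main case
    rw [hLHS, hRHS, prod_smul_apply' _ _ ENNReal.ofReal_ne_top _ _ _ hS,
      prod_smul_apply' _ _ ENNReal.ofReal_ne_top _ _ _ hS]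
    apply mul_le_mul_right
    refine le_trans (strip_bound' B₀ B₁ hB₀ hB₁ N hB₀sub hB₁sub L μ hμ hcase hB₀vol hB₁vol) ?_
    have := unif_lower' c μ hμ (by rw [h2c]; exact hcase)
    rw [h2c] at this
    exact this
  · -- μ > L : RHS is 1
    have hIvol : volume I = ENNReal.ofReal L := by
      rw [hIdef, Real.volume_Ioo]
      congr 1; rw [← h2c]; ring
    have hcompl : ((ENNReal.ofReal b • volume.restrict I).prod
        (ENNReal.ofReal b • volume.restrict I)) Sᶜ = 0 := by
      rw [prod_smul_apply' _ _ ENNReal.ofReal_ne_top _ _ _ hS.compl]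
      have hzero : ((volume.restrict I).prod (volume.restrict I)) Sᶜ = 0 := by
        rw [Measure.prod_apply hS.compl]
        have hptz : ∀ x ∈ I, (volume.restrict I) (Prod.mk x ⁻¹' Sᶜ) = 0 := by
          intro x hx
          rw [Measure.restrict_apply' measurableSet_Ioo]
          have hempty : (Prod.mk x ⁻¹' Sᶜ) ∩ I = ∅ := by
            ext y
            simp only [Set.mem_empty_iff_false, iff_false]
            rintro ⟨hyc, hyI⟩
            rw [hIdef, Set.mem_Ioo] at hyI
            rw [hIdef, Set.mem_Ioo] at hx
            have habs : |x - y| < 2 * c :=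
              abs_lt.mpr ⟨by linarith [hx.1, hx.2, hyI.1, hyI.2],
                by linarith [hx.1, hx.2, hyI.1, hyI.2]⟩
            have hmem : (x, y) ∈ S := by
              rw [hSdef, Set.mem_setOf_eq]
              calc |(x, y).1 - (x, y).2| = |x - y| := rfl
                _ < 2 * c := habs
                _ = L := h2c
                _ ≤ μ := hcase.le
            exact hyc hmem
          rw [hempty]
          simp
        calc ∫⁻ x, (volume.restrict I) (Prod.mk x ⁻¹' Sᶜ) ∂(volume.restrict I)
            = ∫⁻ x in I, (0:ℝ≥0∞) ∂volume := by
              apply setLIntegral_congr_fun measurableSet_Ioo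
              exact hptz
          _ = 0 := by simp
      rw [hzero, mul_zero]
    have hone : P {ω | |U₀ ω - U₁ ω| < μ} = 1 := by
      have hmeas : MeasurableSet {ω | |U₀ ω - U₁ ω| < μ} := by
        have : {ω | |U₀ ω - U₁ ω| < μ} = (fun ω => (U₀ ω, U₁ ω)) ⁻¹' S := rfl
        rw [this]; exact (hU₀.prodMk hU₁) hS
      rw [← prob_compl_eq_zero_iff hmeas]
      have hsetc : {ω | |U₀ ω - U₁ ω| < μ}ᶜ = (fun ω => (U₀ ω, U₁ ω)) ⁻¹' Sᶜ := rfl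
      rw [hsetc, ← Measure.map_apply (hU₀.prodMk hU₁) hS.compl, hpairU, hU₀law, hU₁law]
      exact hcompl
    rw [hone]
    exact prob_le_one
end

section
/- Fix b > 0, N ≥ 1/(2b), and μ > 0. Let X and Y be independent random variables whose distributions are symmetric, supported on [−N, N], and have distribution functions Lipschitz with constant b; let U₀ and U₁ be independent random variables each uniformly distributed on (−1/(2b), 1/(2b)). If bμ < 1 then P(X ≤ Y + μ) ≤ P(U₀ ≤ U₁ + μ) = bμ + (1/2)(1 − (bμ)²). If bμ ≥ 1 then P(U₀ ≤ U₁ + μ) = 1. -/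
open MeasureTheory ProbabilityTheory

/-- A distribution on `ℝ` is symmetric if it is invariant under `x ↦ -x`. -/
def SymmetricDist (μ : Measure ℝ) : Prop :=
  μ.map (fun x => -x) = μ

private lemma aux_step (t fa fb ga gb : ℝ) (hf : fa ≤ fb) (hg : ga ≤ gb) :
    max (fb - t) 0 * max (gb - t) 0 ≤
      max (fa - t) 0 * max (ga - t) 0 + max (fa - t) 0 * (gb - ga)
        + max (ga - t) 0 * (fb - fa) + (fb - fa) * (gb - ga) := by
  have h1 : max (fb - t) 0 ≤ max (fa - t) 0 + (fb - fa) := by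
    apply max_le
    · have : fa - t ≤ max (fa - t) 0 := le_max_left _ _
      linarith
    · have : (0:ℝ) ≤ max (fa - t) 0 := le_max_right _ _
      linarith
  have h2 : max (gb - t) 0 ≤ max (ga - t) 0 + (gb - ga) := by
    apply max_le
    · have : ga - t ≤ max (ga - t) 0 := le_max_left _ _
      linarith
    · have : (0:ℝ) ≤ max (ga - t) 0 := le_max_right _ _
      linarith
  have hb0 : (0:ℝ) ≤ max (gb - t) 0 := le_max_right _ _
  have ha0 : (0:ℝ) ≤ max (fa - t) 0 := le_max_right _ _
  calc max (fb - t) 0 * max (gb - t) 0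
      ≤ (max (fa - t) 0 + (fb - fa)) * max (gb - t) 0 :=
        mul_le_mul_of_nonneg_right h1 hb0
    _ ≤ (max (fa - t) 0 + (fb - fa)) * (max (ga - t) 0 + (gb - ga)) :=
        mul_le_mul_of_nonneg_left h2 (by linarith)
    _ = _ := by ring

private lemma integrable_of_mono_bdd (m : Measure ℝ) [IsFiniteMeasure m] (h : ℝ → ℝ)
    (hmono : Monotone h) (hbd : ∀ x, ‖h x‖ ≤ 1) : Integrable h m :=
  Integrable.mono' (integrable_const 1) hmono.measurable.aestronglyMeasurable (ae_of_all _ hbd)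

private lemma iio_eq_iic (ν : Measure ℝ) [IsProbabilityMeasure ν] (b : ℝ) (hb : 0 < b)
    (hlip : LipschitzWith (Real.toNNReal b) (fun x => (ν (Set.Iic x)).toReal)) (s : ℝ) :
    ν (Set.Iio s) = ν (Set.Iic s) := by
  have hatom : ν {s} = 0 := by
    have h1 : ∀ ε : ℝ, 0 < ε → (ν {s}).toReal ≤ b * ε := by
      intro ε hε
      have hsub : {s} ⊆ Set.Ioc (s - ε) s := by
        intro x hx
        simp only [Set.mem_singleton_iff] at hx
        subst hx
        constructor <;> [linarith; linarith]
      have hmono := measure_mono (μ := ν) hsub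
      have hioc : (ν (Set.Ioc (s - ε) s)).toReal
          = (ν (Set.Iic s)).toReal - (ν (Set.Iic (s - ε))).toReal := by
        rw [← Set.Iic_sdiff_Iic,
          measure_diff (Set.Iic_subset_Iic.mpr (by linarith))
            measurableSet_Iic.nullMeasurableSet (measure_ne_top ν _),
          ENNReal.toReal_sub_of_le (measure_mono (Set.Iic_subset_Iic.mpr (by linarith)))
            (measure_ne_top ν _)]
      have hlips : (ν (Set.Iic s)).toReal - (ν (Set.Iic (s - ε))).toReal ≤ b * ε := by
        have hd := hlip.dist_le_mul s (s - ε)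
        rw [Real.dist_eq, Real.dist_eq] at hd
        have habs : |s - (s - ε)| = ε := by
          rw [show s - (s - ε) = ε by ring, abs_of_pos hε]
        have h' : |(ν (Set.Iic s)).toReal - (ν (Set.Iic (s - ε))).toReal| ≤ b * ε := by
          calc |(ν (Set.Iic s)).toReal - (ν (Set.Iic (s - ε))).toReal|
              ≤ (Real.toNNReal b : ℝ) * |s - (s - ε)| := hd
            _ = b * ε := by rw [habs, Real.coe_toNNReal b hb.le]
        calc (ν (Set.Iic s)).toReal - (ν (Set.Iic (s - ε))).toReal
            ≤ |(ν (Set.Iic s)).toReal - (ν (Set.Iic (s - ε))).toReal| := le_abs_self _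
          _ ≤ b * ε := h'
      calc (ν {s}).toReal ≤ (ν (Set.Ioc (s - ε) s)).toReal :=
            ENNReal.toReal_mono (measure_ne_top ν _) hmono
        _ = _ := hioc
        _ ≤ b * ε := hlips
    have h2 : (ν {s}).toReal ≤ 0 := by
      refine le_of_forall_pos_le_add fun ε hε => ?_
      have := h1 (ε / b) (by positivity)
      calc (ν {s}).toReal ≤ b * (ε / b) := this
        _ = ε := by field_simp
        _ = 0 + ε := by ring
    have h3 : (ν {s}).toReal = 0 := le_antisymm h2 ENNReal.toReal_nonneg
    rcases (ENNReal.toReal_eq_zero_iff _).mp h3 with h | h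
    · exact h
    · exact absurd h (measure_ne_top ν _)
  refine le_antisymm (measure_mono Set.Iio_subset_Iic_self) ?_
  calc ν (Set.Iic s) = ν (Set.Iio s ∪ {s}) := by rw [Set.Iio_union_right]
    _ ≤ ν (Set.Iio s) + ν {s} := measure_union_le _ _
    _ = ν (Set.Iio s) := by rw [hatom, add_zero]

private lemma key_sum (ν ρ : Measure ℝ) [IsProbabilityMeasure ν] [IsProbabilityMeasure ρ]
    (b t c : ℝ) (hb : 0 < b) (ht0 : 0 ≤ t) (ht1 : t ≤ 1) (hc : 0 < c)
    (hFlip : LipschitzWith (Real.toNNReal b) (fun x => (ν (Set.Iic x)).toReal))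
    (hFa : ((ν (Set.Iic (-c))).toReal) = 0) (hFc : ((ν (Set.Iic c)).toReal) = 1)
    (hGa : ((ρ (Set.Iic (-c))).toReal) = 0) (hGc : ((ρ (Set.Iic c)).toReal) = 1) :
    (1 - t)^2 ≤ (∫ y, max ((ν (Set.Iic y)).toReal - t) 0 ∂ρ)
      + (∫ x, max ((ρ (Set.Iic x)).toReal - t) 0 ∂ν) := by
  set F : ℝ → ℝ := fun x => (ν (Set.Iic x)).toReal with hFdef
  set G : ℝ → ℝ := fun x => (ρ (Set.Iic x)).toReal with hGdef
  have hFmono : Monotone F := fun x y h =>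
    ENNReal.toReal_mono (measure_ne_top ν _) (measure_mono (Set.Iic_subset_Iic.mpr h))
  have hGmono : Monotone G := fun x y h =>
    ENNReal.toReal_mono (measure_ne_top ρ _) (measure_mono (Set.Iic_subset_Iic.mpr h))
  have hF1 : ∀ x, F x ≤ 1 := fun x => by
    simpa using ENNReal.toReal_mono ENNReal.one_ne_top (prob_le_one (μ := ν) (s := Set.Iic x))
  have hG1 : ∀ x, G x ≤ 1 := fun x => by
    simpa using ENNReal.toReal_mono ENNReal.one_ne_top (prob_le_one (μ := ρ) (s := Set.Iic x))
  have hF0 : ∀ x, 0 ≤ F x := fun x => ENNReal.toReal_nonneg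
  have hG0 : ∀ x, 0 ≤ G x := fun x => ENNReal.toReal_nonneg
  set pF : ℝ → ℝ := fun x => max (F x - t) 0 with hpFdef
  set pG : ℝ → ℝ := fun x => max (G x - t) 0 with hpGdef
  have hpFmono : Monotone pF := fun x y h =>
    max_le_max (sub_le_sub_right (hFmono h) t) le_rfl
  have hpGmono : Monotone pG := fun x y h =>
    max_le_max (sub_le_sub_right (hGmono h) t) le_rfl
  have hpFbd : ∀ x, ‖pF x‖ ≤ 1 := by
    intro x
    rw [Real.norm_eq_abs, abs_of_nonneg (le_max_right _ _)]
    exact max_le (by have := hF1 x; linarith) (by norm_num)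
  have hpGbd : ∀ x, ‖pG x‖ ≤ 1 := by
    intro x
    rw [Real.norm_eq_abs, abs_of_nonneg (le_max_right _ _)]
    exact max_le (by have := hG1 x; linarith) (by norm_num)
  have intF : Integrable pF ρ := integrable_of_mono_bdd ρ pF hpFmono hpFbd
  have intG : Integrable pG ν := integrable_of_mono_bdd ν pG hpGmono hpGbd
  have hGIoc : ∀ u v : ℝ, u ≤ v → (ρ (Set.Ioc u v)).toReal = G v - G u := by
    intro u v huv
    rw [← Set.Iic_sdiff_Iic,
      measure_diff (Set.Iic_subset_Iic.mpr huv) measurableSet_Iic.nullMeasurableSet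
        (measure_ne_top ρ _),
      ENNReal.toReal_sub_of_le (measure_mono (Set.Iic_subset_Iic.mpr huv)) (measure_ne_top ρ _)]
  have hFIoc : ∀ u v : ℝ, u ≤ v → (ν (Set.Ioc u v)).toReal = F v - F u := by
    intro u v huv
    rw [← Set.Iic_sdiff_Iic,
      measure_diff (Set.Iic_subset_Iic.mpr huv) measurableSet_Iic.nullMeasurableSet
        (measure_ne_top ν _),
      ENNReal.toReal_sub_of_le (measure_mono (Set.Iic_subset_Iic.mpr huv)) (measure_ne_top ν _)]
  have pieceF : ∀ u v : ℝ, u ≤ v → pF u * (G v - G u) ≤ ∫ y in Set.Ioc u v, pF y ∂ρ := by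
    intro u v huv
    calc pF u * (G v - G u) = (ρ (Set.Ioc u v)).toReal • pF u := by
          rw [hGIoc u v huv, smul_eq_mul]; ring
      _ = ∫ _ in Set.Ioc u v, pF u ∂ρ := (setIntegral_const _).symm
      _ ≤ ∫ y in Set.Ioc u v, pF y ∂ρ := by
          refine setIntegral_mono_on (integrable_const _).integrableOn intF.integrableOn
            measurableSet_Ioc fun y hy => hpFmono hy.1.le
  have pieceG : ∀ u v : ℝ, u ≤ v → pG u * (F v - F u) ≤ ∫ x in Set.Ioc u v, pG x ∂ν := by
    intro u v huv
    calc pG u * (F v - F u) = (ν (Set.Ioc u v)).toReal • pG u := by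
          rw [hFIoc u v huv, smul_eq_mul]; ring
      _ = ∫ _ in Set.Ioc u v, pG u ∂ν := (setIntegral_const _).symm
      _ ≤ ∫ x in Set.Ioc u v, pG x ∂ν := by
          refine setIntegral_mono_on (integrable_const _).integrableOn intG.integrableOn
            measurableSet_Ioc fun x hx => hpGmono hx.1.le
  have main : ∀ n : ℕ, 0 < n →
      (1 - t)^2 - b * (2 * c) / n ≤ (∫ y, pF y ∂ρ) + (∫ x, pG x ∂ν) := by
    intro n hn
    have hn0 : (0:ℝ) < n := by exact_mod_cast hn
    set δ : ℝ := 2 * c / n with hδdef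
    have hδ0 : 0 ≤ δ := by positivity
    set yy : ℕ → ℝ := fun k => -c + k * δ with hyydef
    have hy0 : yy 0 = -c := by simp [hyydef]
    have hyn : yy n = c := by
      have : (n:ℝ) ≠ 0 := ne_of_gt hn0
      simp only [hyydef, hδdef]
      rw [mul_div_cancel₀ _ this]
      ring
    have hstep : ∀ m : ℕ, yy (m + 1) = yy m + δ := by
      intro m; simp only [hyydef]; push_cast; ring
    have hymono : ∀ m : ℕ, yy m ≤ yy (m + 1) := by
      intro m; rw [hstep m]; linarith
    have hyc : ∀ m : ℕ, -c ≤ yy m := by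
      intro m
      simp only [hyydef]
      have : (0:ℝ) ≤ (m:ℝ) * δ := by positivity
      linarith
    have claim : ∀ m : ℕ,
        pF (yy m) * pG (yy m) - (b * δ * G (yy m) - b * δ * G (-c)) ≤
          (∫ y in Set.Ioc (-c) (yy m), pF y ∂ρ) + (∫ x in Set.Ioc (-c) (yy m), pG x ∂ν) := by
      intro m
      induction m with
      | zero =>
        rw [hy0]
        have hpFa : pF (-c) = 0 := by
          simp only [hpFdef, hFdef]
          rw [hFa]
          exact max_eq_right (by linarith)
        rw [Set.Ioc_self]
        simp [hpFa]
      | succ m ih =>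
        have hsplit : Set.Ioc (-c) (yy (m + 1))
            = Set.Ioc (-c) (yy m) ∪ Set.Ioc (yy m) (yy (m + 1)) :=
          (Set.Ioc_union_Ioc_eq_Ioc (hyc m) (hymono m)).symm
        rw [hsplit,
          setIntegral_union (Set.Ioc_disjoint_Ioc_of_le le_rfl) measurableSet_Ioc
            intF.integrableOn intF.integrableOn,
          setIntegral_union (Set.Ioc_disjoint_Ioc_of_le le_rfl) measurableSet_Ioc
            intG.integrableOn intG.integrableOn]
        have hp1 := pieceF (yy m) (yy (m + 1)) (hymono m)
        have hp2 := pieceG (yy m) (yy (m + 1)) (hymono m)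
        have halg := aux_step t (F (yy m)) (F (yy (m + 1))) (G (yy m)) (G (yy (m + 1)))
          (hFmono (hymono m)) (hGmono (hymono m))
        have hlipstep : F (yy (m + 1)) - F (yy m) ≤ b * δ := by
          have hd := hFlip.dist_le_mul (yy (m + 1)) (yy m)
          rw [Real.dist_eq, Real.dist_eq] at hd
          have h2 : yy (m + 1) - yy m = δ := by rw [hstep m]; ring
          have h1 : |F (yy (m + 1)) - F (yy m)| ≤ b * δ := by
            calc |F (yy (m + 1)) - F (yy m)| ≤ (Real.toNNReal b : ℝ) * |yy (m + 1) - yy m| := hd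
              _ = b * δ := by rw [h2, abs_of_nonneg hδ0, Real.coe_toNNReal b hb.le]
          calc F (yy (m + 1)) - F (yy m) ≤ |F (yy (m + 1)) - F (yy m)| := le_abs_self _
            _ ≤ b * δ := h1
        have hGm : G (yy m) ≤ G (yy (m + 1)) := hGmono (hymono m)
        have hcross : (F (yy (m + 1)) - F (yy m)) * (G (yy (m + 1)) - G (yy m))
            ≤ b * δ * G (yy (m + 1)) - b * δ * G (yy m) := by
          have := mul_le_mul_of_nonneg_right hlipstep (by linarith : (0:ℝ) ≤ G (yy (m+1)) - G (yy m))
          nlinarith [this]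
        linarith [ih, hp1, hp2, halg, hcross]
    have hm := claim n
    rw [hyn] at hm
    have hpFc : pF c = 1 - t := by
      simp only [hpFdef, hFdef]; rw [hFc]; exact max_eq_left (by linarith)
    have hpGc : pG c = 1 - t := by
      simp only [hpGdef, hGdef]; rw [hGc]; exact max_eq_left (by linarith)
    have hI1 : ∫ y in Set.Ioc (-c) c, pF y ∂ρ ≤ ∫ y, pF y ∂ρ :=
      setIntegral_le_integral intF (ae_of_all _ fun y => le_max_right _ _)
    have hI2 : ∫ x in Set.Ioc (-c) c, pG x ∂ν ≤ ∫ x, pG x ∂ν :=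
      setIntegral_le_integral intG (ae_of_all _ fun x => le_max_right _ _)
    have hGceq : G c = 1 := hGc
    have hGaeq : G (-c) = 0 := hGa
    rw [hpFc, hpGc, hGceq, hGaeq] at hm
    have hδeq : b * δ * 1 - b * δ * 0 = b * (2 * c) / n := by
      rw [hδdef]; ring
    nlinarith [hm, hI1, hI2]
  refine le_of_forall_pos_le_add fun ε hε => ?_
  obtain ⟨n, hn⟩ := exists_nat_gt (b * (2 * c) / ε)
  have hq : 0 < b * (2 * c) / ε := by positivity
  have hn0 : 0 < n := by exact_mod_cast lt_trans hq hn
  have h1 := main n hn0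
  have hn0' : (0:ℝ) < n := by exact_mod_cast hn0
  have h2 : b * (2 * c) / n < ε := by
    rw [div_lt_iff₀ hn0']
    rw [div_lt_iff₀ hε] at hn
    nlinarith [hn]
  linarith

theorem stmt_16 {Ω : Type*} {mΩ : MeasurableSpace Ω} (P : Measure Ω)
    [IsProbabilityMeasure P] (b N μ : ℝ) (hb : 0 < b) (hN : 1 / (2 * b) ≤ N)
    (hμ : 0 < μ) (X Y U₀ U₁ : Ω → ℝ)
    (hX : Measurable X) (hY : Measurable Y)
    (hU₀ : Measurable U₀) (hU₁ : Measurable U₁)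
    (hXYindep : IndepFun X Y P) (hUindep : IndepFun U₀ U₁ P)
    (hXsymm : SymmetricDist (P.map X)) (hYsymm : SymmetricDist (P.map Y))
    (hXsupp : (P.map X) (Set.Icc (-N) N)ᶜ = 0)
    (hYsupp : (P.map Y) (Set.Icc (-N) N)ᶜ = 0)
    (hXlip : LipschitzWith (Real.toNNReal b) (fun x => ((P.map X) (Set.Iic x)).toReal))
    (hYlip : LipschitzWith (Real.toNNReal b) (fun x => ((P.map Y) (Set.Iic x)).toReal))
    (hU₀law : P.map U₀ = ENNReal.ofReal b •
      volume.restrict (Set.Ioo (-(1 / (2 * b))) (1 / (2 * b))))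
    (hU₁law : P.map U₁ = ENNReal.ofReal b •
      volume.restrict (Set.Ioo (-(1 / (2 * b))) (1 / (2 * b)))) :
    (b * μ < 1 →
      P {ω | X ω ≤ Y ω + μ} ≤ P {ω | U₀ ω ≤ U₁ ω + μ} ∧
      (P {ω | U₀ ω ≤ U₁ ω + μ}).toReal = b * μ + (1 / 2) * (1 - (b * μ) ^ 2)) ∧
    (1 ≤ b * μ → (P {ω | U₀ ω ≤ U₁ ω + μ}).toReal = 1) := by
  have hw0 : (0:ℝ) < 1 / (2 * b) := by positivity
  have hN0 : (0:ℝ) < N := lt_of_lt_of_le hw0 hN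
  set w : ℝ := 1 / (2 * b) with hwdef
  set t : ℝ := b * μ with htdef
  have ht0 : 0 < t := by rw [htdef]; positivity
  set ν : Measure ℝ := P.map X with hνdef
  set ρ : Measure ℝ := P.map Y with hρdef
  set νU : Measure ℝ := ENNReal.ofReal b • volume.restrict (Set.Ioo (-w) w) with hνUdef
  haveI hνP : IsProbabilityMeasure ν := by
    rw [hνdef]; exact Measure.isProbabilityMeasure_map hX.aemeasurable
  haveI hρP : IsProbabilityMeasure ρ := by
    rw [hρdef]; exact Measure.isProbabilityMeasure_map hY.aemeasurable
  haveI hνUP : IsProbabilityMeasure νU := by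
    rw [← hU₀law]; exact Measure.isProbabilityMeasure_map hU₀.aemeasurable
  have hmapXY : P.map (fun ω => (X ω, Y ω)) = ν.prod ρ := by
    rw [hνdef, hρdef]
    exact (indepFun_iff_map_prod_eq_prod_map_map hX.aemeasurable hY.aemeasurable).mp hXYindep
  have hmapU : P.map (fun ω => (U₀ ω, U₁ ω)) = νU.prod νU := by
    have h := (indepFun_iff_map_prod_eq_prod_map_map hU₀.aemeasurable hU₁.aemeasurable).mp hUindep
    rw [hU₀law, hU₁law] at h
    exact h
  have hS₁m : MeasurableSet {p : ℝ × ℝ | p.1 < p.2 - μ} :=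
    measurableSet_lt measurable_fst (measurable_snd.sub measurable_const)
  have hS₂m : MeasurableSet {p : ℝ × ℝ | p.2 < p.1 - μ} :=
    measurableSet_lt measurable_snd (measurable_fst.sub measurable_const)
  have hPXY2 : P {ω | Y ω < X ω - μ} = (ν.prod ρ) {p : ℝ × ℝ | p.2 < p.1 - μ} := by
    rw [← hmapXY, Measure.map_apply (hX.prodMk hY) hS₂m]
    rfl
  have hPXY1 : P {ω | X ω < Y ω - μ} = (ν.prod ρ) {p : ℝ × ℝ | p.1 < p.2 - μ} := by
    rw [← hmapXY, Measure.map_apply (hX.prodMk hY) hS₁m]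
    rfl
  have hPU2 : P {ω | U₁ ω < U₀ ω - μ} = (νU.prod νU) {p : ℝ × ℝ | p.2 < p.1 - μ} := by
    rw [← hmapU, Measure.map_apply (hU₀.prodMk hU₁) hS₂m]
    rfl
  -- complement identities
  have hcomplU : {ω | U₀ ω ≤ U₁ ω + μ}ᶜ = {ω | U₁ ω < U₀ ω - μ} := by
    ext ω
    simp only [Set.mem_compl_iff, Set.mem_setOf_eq, not_le]
    constructor <;> intro h <;> linarith
  have hmeasUle : MeasurableSet {ω | U₀ ω ≤ U₁ ω + μ} :=
    measurableSet_le hU₀ (hU₁.add_const μ)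
  have hPeqU : P {ω | U₀ ω ≤ U₁ ω + μ} = 1 - P {ω | U₁ ω < U₀ ω - μ} := by
    have h := prob_add_prob_compl (μ := P) hmeasUle
    rw [hcomplU] at h
    exact ENNReal.eq_sub_of_add_eq (measure_ne_top P _) h
  constructor
  · -- case t < 1
    intro hbμ
    have ht1 : t ≤ 1 := le_of_lt hbμ
    have hμ2w : μ < 2 * w := by
      have h1b : 2 * w = 1 / b := by rw [hwdef]; field_simp
      rw [h1b, lt_div_iff₀ hb]
      have : t = b * μ := htdef
      nlinarith [hbμ]
    -- support facts
    have hFa : ((ν (Set.Iic (-(N+1)))).toReal) = 0 := by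
      have hsub : Set.Iic (-(N+1)) ⊆ (Set.Icc (-N) N)ᶜ := by
        intro x hx
        simp only [Set.mem_Iic] at hx
        simp only [Set.mem_compl_iff, Set.mem_Icc, not_and, not_le]
        intro h1; linarith
      have h0 : ν (Set.Iic (-(N+1))) = 0 := measure_mono_null hsub hXsupp
      rw [h0]; simp
    have hGa : ((ρ (Set.Iic (-(N+1)))).toReal) = 0 := by
      have hsub : Set.Iic (-(N+1)) ⊆ (Set.Icc (-N) N)ᶜ := by
        intro x hx
        simp only [Set.mem_Iic] at hx
        simp only [Set.mem_compl_iff, Set.mem_Icc, not_and, not_le]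
        intro h1; linarith
      have h0 : ρ (Set.Iic (-(N+1))) = 0 := measure_mono_null hsub hYsupp
      rw [h0]; simp
    have hFc : ((ν (Set.Iic (N+1))).toReal) = 1 := by
      have hsub : Set.Ioi (N+1) ⊆ (Set.Icc (-N) N)ᶜ := by
        intro x hx
        simp only [Set.mem_Ioi] at hx
        simp only [Set.mem_compl_iff, Set.mem_Icc, not_and, not_le]
        intro h1; linarith
      have h0 : ν (Set.Ioi (N+1)) = 0 := measure_mono_null hsub hXsupp
      have h1 : ν (Set.Iic (N+1)) = 1 := by
        rw [← Set.compl_Ioi, measure_compl measurableSet_Ioi (measure_ne_top ν _), h0,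
          measure_univ, tsub_zero]
      rw [h1]; simp
    have hGc : ((ρ (Set.Iic (N+1))).toReal) = 1 := by
      have hsub : Set.Ioi (N+1) ⊆ (Set.Icc (-N) N)ᶜ := by
        intro x hx
        simp only [Set.mem_Ioi] at hx
        simp only [Set.mem_compl_iff, Set.mem_Icc, not_and, not_le]
        intro h1; linarith
      have h0 : ρ (Set.Ioi (N+1)) = 0 := measure_mono_null hsub hYsupp
      have h1 : ρ (Set.Iic (N+1)) = 1 := by
        rw [← Set.compl_Ioi, measure_compl measurableSet_Ioi (measure_ne_top ρ _), h0,
          measure_univ, tsub_zero]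
      rw [h1]; simp
    have hkey := key_sum ν ρ b t (N+1) hb ht0.le ht1 (by linarith) hXlip hFa hFc hGa hGc
    -- monotonicity and bounds for CDFs
    have hFmono : Monotone (fun x => (ν (Set.Iic x)).toReal) := fun x y h =>
      ENNReal.toReal_mono (measure_ne_top ν _) (measure_mono (Set.Iic_subset_Iic.mpr h))
    have hGmono : Monotone (fun x => (ρ (Set.Iic x)).toReal) := fun x y h =>
      ENNReal.toReal_mono (measure_ne_top ρ _) (measure_mono (Set.Iic_subset_Iic.mpr h))
    have hF1 : ∀ x, (ν (Set.Iic x)).toReal ≤ 1 := fun x => by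
      simpa using ENNReal.toReal_mono ENNReal.one_ne_top (prob_le_one (μ := ν) (s := Set.Iic x))
    have hG1 : ∀ x, (ρ (Set.Iic x)).toReal ≤ 1 := fun x => by
      simpa using ENNReal.toReal_mono ENNReal.one_ne_top (prob_le_one (μ := ρ) (s := Set.Iic x))
    -- Lipschitz pointwise bound
    have hFlipptw : ∀ y : ℝ, (ν (Set.Iic y)).toReal - t ≤ (ν (Set.Iic (y - μ))).toReal := by
      intro y
      have hd := hXlip.dist_le_mul y (y - μ)
      rw [Real.dist_eq, Real.dist_eq] at hd
      have habs : |y - (y - μ)| = μ := by rw [show y - (y - μ) = μ by ring, abs_of_pos hμ]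
      have h1 : |(ν (Set.Iic y)).toReal - (ν (Set.Iic (y - μ))).toReal| ≤ t := by
        calc |(ν (Set.Iic y)).toReal - (ν (Set.Iic (y - μ))).toReal|
            ≤ (Real.toNNReal b : ℝ) * |y - (y - μ)| := hd
          _ = t := by rw [habs, Real.coe_toNNReal b hb.le, htdef]
      have := le_abs_self ((ν (Set.Iic y)).toReal - (ν (Set.Iic (y - μ))).toReal)
      linarith
    have hGlipptw : ∀ y : ℝ, (ρ (Set.Iic y)).toReal - t ≤ (ρ (Set.Iic (y - μ))).toReal := by
      intro y
      have hd := hYlip.dist_le_mul y (y - μ)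
      rw [Real.dist_eq, Real.dist_eq] at hd
      have habs : |y - (y - μ)| = μ := by rw [show y - (y - μ) = μ by ring, abs_of_pos hμ]
      have h1 : |(ρ (Set.Iic y)).toReal - (ρ (Set.Iic (y - μ))).toReal| ≤ t := by
        calc |(ρ (Set.Iic y)).toReal - (ρ (Set.Iic (y - μ))).toReal|
            ≤ (Real.toNNReal b : ℝ) * |y - (y - μ)| := hd
          _ = t := by rw [habs, Real.coe_toNNReal b hb.le, htdef]
      have := le_abs_self ((ρ (Set.Iic y)).toReal - (ρ (Set.Iic (y - μ))).toReal)
      linarith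
    -- integrability
    have hFshift_int : Integrable (fun y => (ν (Set.Iic (y - μ))).toReal) ρ :=
      integrable_of_mono_bdd ρ _ (fun a a' h => hFmono (by linarith))
        (fun x => by
          rw [Real.norm_eq_abs, abs_of_nonneg ENNReal.toReal_nonneg]; exact hF1 _)
    have hGshift_int : Integrable (fun x => (ρ (Set.Iic (x - μ))).toReal) ν :=
      integrable_of_mono_bdd ν _ (fun a a' h => hGmono (by linarith))
        (fun x => by
          rw [Real.norm_eq_abs, abs_of_nonneg ENNReal.toReal_nonneg]; exact hG1 _)
    have hpF_int : Integrable (fun y => max ((ν (Set.Iic y)).toReal - t) 0) ρ :=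
      integrable_of_mono_bdd ρ _
        (fun a a' h => max_le_max (sub_le_sub_right (hFmono h) t) le_rfl)
        (fun x => by
          rw [Real.norm_eq_abs, abs_of_nonneg (le_max_right _ _)]
          exact max_le (by have := hF1 x; have := ht0; linarith) (by norm_num))
    have hpG_int : Integrable (fun x => max ((ρ (Set.Iic x)).toReal - t) 0) ν :=
      integrable_of_mono_bdd ν _
        (fun a a' h => max_le_max (sub_le_sub_right (hGmono h) t) le_rfl)
        (fun x => by
          rw [Real.norm_eq_abs, abs_of_nonneg (le_max_right _ _)]
          exact max_le (by have := hG1 x; have := ht0; linarith) (by norm_num))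
    -- toReal of slices
    have hslice1 : (ν.prod ρ) {p : ℝ × ℝ | p.1 < p.2 - μ} = ∫⁻ y, ν (Set.Iio (y - μ)) ∂ρ := by
      rw [Measure.prod_apply_symm hS₁m]
      exact lintegral_congr fun y => rfl
    have hslice2 : (ν.prod ρ) {p : ℝ × ℝ | p.2 < p.1 - μ} = ∫⁻ x, ρ (Set.Iio (x - μ)) ∂ν := by
      rw [Measure.prod_apply hS₂m]
      exact lintegral_congr fun x => rfl
    have hS₁toReal : ((ν.prod ρ) {p : ℝ × ℝ | p.1 < p.2 - μ}).toReal
        = ∫ y, (ν (Set.Iic (y - μ))).toReal ∂ρ := by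
      rw [hslice1]
      have hcong : ∀ y : ℝ, ν (Set.Iio (y - μ))
          = ENNReal.ofReal ((ν (Set.Iic (y - μ))).toReal) := by
        intro y
        rw [iio_eq_iic ν b hb hXlip (y - μ), ENNReal.ofReal_toReal (measure_ne_top ν _)]
      rw [lintegral_congr hcong,
        ← ofReal_integral_eq_lintegral_ofReal hFshift_int
          (ae_of_all _ fun y => ENNReal.toReal_nonneg)]
      exact ENNReal.toReal_ofReal (integral_nonneg fun y => ENNReal.toReal_nonneg)
    have hS₂toReal : ((ν.prod ρ) {p : ℝ × ℝ | p.2 < p.1 - μ}).toReal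
        = ∫ x, (ρ (Set.Iic (x - μ))).toReal ∂ν := by
      rw [hslice2]
      have hcong : ∀ x : ℝ, ρ (Set.Iio (x - μ))
          = ENNReal.ofReal ((ρ (Set.Iic (x - μ))).toReal) := by
        intro x
        rw [iio_eq_iic ρ b hb hYlip (x - μ), ENNReal.ofReal_toReal (measure_ne_top ρ _)]
      rw [lintegral_congr hcong,
        ← ofReal_integral_eq_lintegral_ofReal hGshift_int
          (ae_of_all _ fun x => ENNReal.toReal_nonneg)]
      exact ENNReal.toReal_ofReal (integral_nonneg fun x => ENNReal.toReal_nonneg)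
    -- lower bounds on the two slice integrals
    have hA : ∫ y, max ((ν (Set.Iic y)).toReal - t) 0 ∂ρ
        ≤ ∫ y, (ν (Set.Iic (y - μ))).toReal ∂ρ := by
      refine integral_mono hpF_int hFshift_int fun y => ?_
      exact max_le (hFlipptw y) ENNReal.toReal_nonneg
    have hB : ∫ x, max ((ρ (Set.Iic x)).toReal - t) 0 ∂ν
        ≤ ∫ x, (ρ (Set.Iic (x - μ))).toReal ∂ν := by
      refine integral_mono hpG_int hGshift_int fun x => ?_
      exact max_le (hGlipptw x) ENNReal.toReal_nonneg
    -- symmetry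
    have hsymmprod : (ν.prod ρ) {p : ℝ × ℝ | p.1 < p.2 - μ}
        = (ν.prod ρ) {p : ℝ × ℝ | p.2 < p.1 - μ} := by
      have hneg : Measurable fun x : ℝ => -x := measurable_neg
      have hνneg : ν.map (fun x : ℝ => -x) = ν := hXsymm
      have hρneg : ρ.map (fun x : ℝ => -x) = ρ := hYsymm
      have hmapneg : (ν.prod ρ).map (Prod.map (fun x : ℝ => -x) (fun x : ℝ => -x))
          = ν.prod ρ := by
        rw [← Measure.map_prod_map ν ρ hneg hneg, hνneg, hρneg]
      have hpre : (Prod.map (fun x : ℝ => -x) (fun x : ℝ => -x)) ⁻¹'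
          {p : ℝ × ℝ | p.1 < p.2 - μ} = {p : ℝ × ℝ | p.2 < p.1 - μ} := by
        ext p
        constructor
        · intro h
          have h' : -p.1 < -p.2 - μ := h
          show p.2 < p.1 - μ
          linarith
        · intro h
          have h' : p.2 < p.1 - μ := h
          show -p.1 < -p.2 - μ
          linarith
      calc (ν.prod ρ) {p : ℝ × ℝ | p.1 < p.2 - μ}
          = ((ν.prod ρ).map (Prod.map (fun x : ℝ => -x) (fun x : ℝ => -x)))
              {p : ℝ × ℝ | p.1 < p.2 - μ} := by rw [hmapneg]
        _ = (ν.prod ρ) ((Prod.map (fun x : ℝ => -x) (fun x : ℝ => -x)) ⁻¹'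
              {p : ℝ × ℝ | p.1 < p.2 - μ}) :=
            Measure.map_apply (hneg.prodMap hneg) hS₁m
        _ = (ν.prod ρ) {p : ℝ × ℝ | p.2 < p.1 - μ} := by rw [hpre]
    have hBge : (1 - t)^2 / 2 ≤ ((ν.prod ρ) {p : ℝ × ℝ | p.2 < p.1 - μ}).toReal := by
      have h1 : ((ν.prod ρ) {p : ℝ × ℝ | p.1 < p.2 - μ}).toReal
          = ((ν.prod ρ) {p : ℝ × ℝ | p.2 < p.1 - μ}).toReal := by rw [hsymmprod]
      have h2 := hS₁toReal
      have h3 := hS₂toReal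
      linarith [hkey, hA, hB]
    -- uniform side computation
    have hcont : Continuous fun x : ℝ => b * max (x - μ + w) 0 :=
      continuous_const.mul
        (((continuous_id.sub continuous_const).add continuous_const).max continuous_const)
    have hintOn : IntegrableOn (fun x : ℝ => b * max (x - μ + w) 0) (Set.Ioo (-w) w) volume :=
      (hcont.integrableOn_Icc (a := -w) (b := w)).mono_set Set.Ioo_subset_Icc_self
    have hrealint : ∫ x in Set.Ioo (-w) w, b * max (x - μ + w) 0
        = b * (2 * w - μ)^2 / 2 := by
      rw [← integral_Ioc_eq_integral_Ioo,
        ← intervalIntegral.integral_of_le (by linarith : -w ≤ w)]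
      have hle1 : -w ≤ μ - w := by linarith
      have hle2 : μ - w ≤ w := by linarith
      have hii : ∀ a' b' : ℝ,
          IntervalIntegrable (fun x : ℝ => b * max (x - μ + w) 0) volume a' b' :=
        fun a' b' => hcont.intervalIntegrable _ _
      rw [← intervalIntegral.integral_add_adjacent_intervals (hii (-w) (μ - w)) (hii (μ - w) w)]
      have hleft : ∫ x in (-w)..(μ - w), b * max (x - μ + w) 0 = 0 := by
        rw [intervalIntegral.integral_congr (g := fun _ => (0:ℝ)) ?_]
        · simp
        · intro x hx
          rw [Set.uIcc_of_le hle1] at hx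
          have hx2 : x - μ + w ≤ 0 := by have := hx.2; linarith
          simp [max_eq_right hx2]
      have hright : ∫ x in (μ - w)..w, b * max (x - μ + w) 0 = b * (2 * w - μ)^2 / 2 := by
        rw [intervalIntegral.integral_congr (g := fun x => b * (x - (μ - w))) ?_]
        · rw [intervalIntegral.integral_const_mul]
          have e := intervalIntegral.integral_comp_sub_right
            (a := μ - w) (b := w) (fun x : ℝ => x) (μ - w)
          rw [e, integral_id]
          ring
        · intro x hx
          rw [Set.uIcc_of_le hle2] at hx
          have hx1 : 0 ≤ x - μ + w := by have := hx.1; linarith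
          have hmax : max (x - μ + w) 0 = x - μ + w := max_eq_left hx1
          show b * max (x - μ + w) 0 = b * (x - (μ - w))
          rw [hmax]; ring
      rw [hleft, hright]; ring
    have hinner : ∀ x : ℝ, x ∈ Set.Ioo (-w) w →
        νU (Set.Iio (x - μ)) = ENNReal.ofReal (b * max (x - μ + w) 0) := by
      intro x hx
      rw [hνUdef, Measure.smul_apply, Measure.restrict_apply measurableSet_Iio, smul_eq_mul]
      have hseteq : Set.Iio (x - μ) ∩ Set.Ioo (-w) w = Set.Ioo (-w) (x - μ) := by
        ext z
        simp only [Set.mem_inter_iff, Set.mem_Iio, Set.mem_Ioo]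
        constructor
        · rintro ⟨h1, h2, h3⟩; exact ⟨h2, h1⟩
        · rintro ⟨h1, h2⟩; exact ⟨h2, h1, by linarith [hx.2]⟩
      rw [hseteq, Real.volume_Ioo]
      rcases le_total (x - μ + w) 0 with h | h
      · have hmax : max (x - μ + w) 0 = 0 := max_eq_right h
        rw [hmax, mul_zero, ENNReal.ofReal_zero]
        rw [show x - μ - (-w) = x - μ + w by ring, ENNReal.ofReal_of_nonpos h, mul_zero]
      · have hmax : max (x - μ + w) 0 = x - μ + w := max_eq_left h
        rw [hmax, ← ENNReal.ofReal_mul hb.le]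
        congr 1
        ring
    have hcomp : ∫⁻ x, νU (Set.Iio (x - μ)) ∂νU = ENNReal.ofReal ((1 - t)^2 / 2) := by
      set q : ℝ → ENNReal := fun x => νU (Set.Iio (x - μ)) with hqdef
      have h1 : ∫⁻ x, q x ∂νU
          = ENNReal.ofReal b * ∫⁻ x in Set.Ioo (-w) w, q x ∂volume := by
        rw [hνUdef, lintegral_smul_measure, smul_eq_mul]
      rw [h1]
      have h2 : ∫⁻ x in Set.Ioo (-w) w, q x ∂volume
          = ∫⁻ x in Set.Ioo (-w) w, ENNReal.ofReal (b * max (x - μ + w) 0) ∂volume := by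
        refine setLIntegral_congr_fun measurableSet_Ioo (fun x hx => ?_)
        simp only [hqdef]
        exact hinner x hx
      rw [h2,
        ← ofReal_integral_eq_lintegral_ofReal hintOn
          (ae_of_all _ fun x => mul_nonneg hb.le (le_max_right _ _)),
        hrealint, ← ENNReal.ofReal_mul hb.le]
      congr 1
      rw [htdef, hwdef]
      field_simp
    have hUval : P {ω | U₁ ω < U₀ ω - μ} = ENNReal.ofReal ((1 - t)^2 / 2) := by
      rw [hPU2]
      have hsliceU : (νU.prod νU) {p : ℝ × ℝ | p.2 < p.1 - μ}
          = ∫⁻ x, νU (Set.Iio (x - μ)) ∂νU := by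
        rw [Measure.prod_apply hS₂m]
        exact lintegral_congr fun x => rfl
      rw [hsliceU, hcomp]
    have hUfinal : P {ω | U₀ ω ≤ U₁ ω + μ} = 1 - ENNReal.ofReal ((1 - t)^2 / 2) := by
      rw [hPeqU, hUval]
    have harg0 : (0:ℝ) ≤ (1 - t)^2 / 2 := by positivity
    have harg1 : (1 - t)^2 / 2 ≤ 1 := by nlinarith
    have hval : (P {ω | U₀ ω ≤ U₁ ω + μ}).toReal = 1 - (1 - t)^2 / 2 := by
      rw [hUfinal, ← ENNReal.ofReal_one, ← ENNReal.ofReal_sub _ harg0,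
        ENNReal.toReal_ofReal (by linarith)]
    constructor
    · -- the inequality
      have hcompl : {ω | X ω ≤ Y ω + μ}ᶜ = {ω | Y ω < X ω - μ} := by
        ext ω
        simp only [Set.mem_compl_iff, Set.mem_setOf_eq, not_le]
        constructor <;> intro h <;> linarith
      have hmeasXle : MeasurableSet {ω | X ω ≤ Y ω + μ} :=
        measurableSet_le hX (hY.add_const μ)
      have hPeq : P {ω | X ω ≤ Y ω + μ} = 1 - P {ω | Y ω < X ω - μ} := by
        have h := prob_add_prob_compl (μ := P) hmeasXle
        rw [hcompl] at h
        exact ENNReal.eq_sub_of_add_eq (measure_ne_top P _) h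
      rw [hPeq, hUfinal]
      apply tsub_le_tsub_left _ 1
      apply ENNReal.ofReal_le_of_le_toReal
      rw [hPXY2]
      exact hBge
    · rw [hval]
      ring
  · -- case 1 ≤ t
    intro hbμ1
    have h2w : 2 * w ≤ μ := by
      have h1b : 2 * w = 1 / b := by rw [hwdef]; field_simp
      rw [h1b, div_le_iff₀ hb]
      nlinarith [hbμ1]
    have hU₀Ioo : P {ω | U₀ ω ∉ Set.Ioo (-w) w} = 0 := by
      have heq : {ω | U₀ ω ∉ Set.Ioo (-w) w} = U₀ ⁻¹' (Set.Ioo (-w) w)ᶜ := rfl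
      rw [heq, ← Measure.map_apply hU₀ measurableSet_Ioo.compl, hU₀law,
        Measure.smul_apply, Measure.restrict_apply measurableSet_Ioo.compl,
        Set.compl_inter_self, measure_empty, smul_zero]
    have hU₁Ioo : P {ω | U₁ ω ∉ Set.Ioo (-w) w} = 0 := by
      have heq : {ω | U₁ ω ∉ Set.Ioo (-w) w} = U₁ ⁻¹' (Set.Ioo (-w) w)ᶜ := rfl
      rw [heq, ← Measure.map_apply hU₁ measurableSet_Ioo.compl, hU₁law,
        Measure.smul_apply, Measure.restrict_apply measurableSet_Ioo.compl,
        Set.compl_inter_self, measure_empty, smul_zero]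
    have hsub : {ω | U₁ ω < U₀ ω - μ} ⊆
        {ω | U₀ ω ∉ Set.Ioo (-w) w} ∪ {ω | U₁ ω ∉ Set.Ioo (-w) w} := by
      intro ω hω
      simp only [Set.mem_setOf_eq] at hω
      by_contra hcon
      simp only [Set.mem_union, Set.mem_setOf_eq, not_or, not_not, Set.mem_Ioo] at hcon
      obtain ⟨⟨h0a, h0b⟩, ⟨h1a, h1b⟩⟩ := hcon
      linarith
    have h0 : P {ω | U₁ ω < U₀ ω - μ} = 0 := by
      refine le_antisymm ?_ zero_le
      calc P {ω | U₁ ω < U₀ ω - μ}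
          ≤ P ({ω | U₀ ω ∉ Set.Ioo (-w) w} ∪ {ω | U₁ ω ∉ Set.Ioo (-w) w}) :=
            measure_mono hsub
        _ ≤ P {ω | U₀ ω ∉ Set.Ioo (-w) w} + P {ω | U₁ ω ∉ Set.Ioo (-w) w} :=
            measure_union_le _ _
        _ = 0 := by rw [hU₀Ioo, hU₁Ioo, add_zero]
    rw [hPeqU, h0, tsub_zero]
    simp
end

section
/- Let X₀ and X₁ be independent real random variables with continuous distribution functions F₀ and F₁. For 0 < α < 1 define x(α) = sup{x : 1 − F₀(x) ≥ α}. Then the area under the ROC curve, AUC = ∫₀¹ (1 − F₁(x(α))) dα, satisfies AUC = P(X₀ ≤ X₁). -/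
open MeasureTheory ProbabilityTheory Set Filter Topology

/-- Bamber's identity: the area under the ROC curve equals `P(X₀ ≤ X₁)` for
independent `X₀`, `X₁` with continuous distribution functions. -/
theorem stmt_18 {Ω : Type*} {mΩ : MeasurableSpace Ω} (P : Measure Ω)
    [IsProbabilityMeasure P] (X₀ X₁ : Ω → ℝ)
    (hX₀ : Measurable X₀) (hX₁ : Measurable X₁)
    (hindep : IndepFun X₀ X₁ P)
    (F₀ F₁ : ℝ → ℝ)
    (hF₀ : ∀ x, F₀ x = (P {ω | X₀ ω ≤ x}).toReal)
    (hF₁ : ∀ x, F₁ x = (P {ω | X₁ ω ≤ x}).toReal)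
    (hF₀cont : Continuous F₀) (hF₁cont : Continuous F₁)
    (xα : ℝ → ℝ) (hxα : ∀ α, xα α = sSup {x | α ≤ 1 - F₀ x}) :
    (∫ α in Set.Ioo (0 : ℝ) 1, (1 - F₁ (xα α))) =
      (P {ω | X₀ ω ≤ X₁ ω}).toReal := by
  have hμ₀ : IsProbabilityMeasure (P.map X₀) := Measure.isProbabilityMeasure_map hX₀.aemeasurable
  have hμ₁ : IsProbabilityMeasure (P.map X₁) := Measure.isProbabilityMeasure_map hX₁.aemeasurable
  have hmap₀ : ∀ x : ℝ, P.map X₀ (Iic x) = P {ω | X₀ ω ≤ x} := by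
    intro x
    rw [Measure.map_apply hX₀ measurableSet_Iic]; rfl
  have hF₀cdf : F₀ = fun x => cdf (P.map X₀) x := by
    funext x
    rw [hF₀, cdf_eq_real, measureReal_def, hmap₀]
  have hmono : Monotone F₀ := by rw [hF₀cdf]; exact monotone_cdf _
  have hle1 : ∀ x, F₀ x ≤ 1 := by rw [hF₀cdf]; exact cdf_le_one _
  have hge0 : ∀ x, 0 ≤ F₀ x := by rw [hF₀cdf]; exact cdf_nonneg _
  have hbot : Tendsto F₀ atBot (𝓝 0) := by rw [hF₀cdf]; exact tendsto_cdf_atBot _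
  have htop : Tendsto F₀ atTop (𝓝 1) := by rw [hF₀cdf]; exact tendsto_cdf_atTop _
  -- Key lemma: for α ∈ (0,1), xα α < t ↔ 1 - F₀ t < α
  have hA : ∀ α ∈ Ioo (0:ℝ) 1, ∀ t : ℝ, (xα α < t ↔ 1 - F₀ t < α) := by
    rintro α ⟨hα0, hα1⟩ t
    have hSne : {x | α ≤ 1 - F₀ x}.Nonempty := by
      obtain ⟨x, hx⟩ := (hbot.eventually_lt_const (by linarith : (0:ℝ) < 1 - α)).exists
      exact ⟨x, by simp only [mem_setOf_eq]; linarith⟩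
    have hSbdd : BddAbove {x | α ≤ 1 - F₀ x} := by
      obtain ⟨x₀, hx₀⟩ := eventually_atTop.mp
        (htop.eventually_const_lt (by linarith : (1:ℝ) - α < 1))
      refine ⟨x₀, fun x hx => ?_⟩
      by_contra h
      have := hx₀ x (le_of_not_ge h)
      simp only [mem_setOf_eq] at hx
      linarith
    rw [hxα]
    constructor
    · intro h
      by_contra hc
      push_neg at hc
      exact absurd (le_csSup hSbdd (by simpa [mem_setOf_eq] using hc)) (not_le.mpr h)
    · intro h
      by_contra hc
      push_neg at hc
      have key : ∀ x < t, α ≤ 1 - F₀ x := by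
        intro x hx
        obtain ⟨s, hs, hxs⟩ := exists_lt_of_lt_csSup hSne (lt_of_lt_of_le hx hc)
        have := hmono hxs.le
        simp only [mem_setOf_eq] at hs
        linarith
      have htend : Tendsto (fun x => 1 - F₀ x) (𝓝[<] t) (𝓝 (1 - F₀ t)) :=
        ((continuous_const.sub hF₀cont).continuousAt).continuousWithinAt
      have : α ≤ 1 - F₀ t :=
        ge_of_tendsto htend (eventually_nhdsWithin_of_forall fun x hx => key x hx)
      linarith
  -- 1 - F₁ t = P(X₁ > t)
  have hcompl : ∀ t : ℝ, 1 - F₁ t = (P {ω | t < X₁ ω}).toReal := by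
    intro t
    have hset : {ω | t < X₁ ω} = {ω | X₁ ω ≤ t}ᶜ := by
      ext ω; simp [not_le]
    rw [hF₁, hset,
      prob_compl_eq_one_sub (s := {ω | X₁ ω ≤ t}) (hX₁ measurableSet_Iic),
      ENNReal.toReal_sub_of_le prob_le_one ENNReal.one_ne_top]
    simp
  set c : Ω → ℝ := fun ω => 1 - F₀ (X₁ ω) with hc
  set φ : ℝ → ℝ := fun α => (P {ω | c ω < α}).toReal with hφ
  have hφmono : Monotone φ := by
    intro a b hab
    exact ENNReal.toReal_mono (measure_ne_top P _)
      (measure_mono fun ω hω => lt_of_lt_of_le hω hab)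
  have hEq : ∀ α ∈ Ioo (0:ℝ) 1, 1 - F₁ (xα α) = φ α := by
    intro α hα
    have hsets : {ω | xα α < X₁ ω} = {ω | c ω < α} := by
      ext ω
      simp only [mem_setOf_eq, hc]
      exact hA α hα (X₁ ω)
    rw [hcompl, hsets]
  set ν : Measure ℝ := volume.restrict (Ioo (0:ℝ) 1) with hν
  set S : Set (ℝ × Ω) := {p | c p.2 < p.1} with hS
  have hcmeas : Measurable c := continuous_const.sub hF₀cont |>.measurable.comp hX₁
  have hSmeas : MeasurableSet S :=
    measurableSet_lt (hcmeas.comp measurable_snd) measurable_fst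
  -- LHS = ((ν.prod P) S).toReal
  have step1 : (∫ α in Ioo (0:ℝ) 1, (1 - F₁ (xα α))) = ((ν.prod P) S).toReal := by
    rw [setIntegral_congr_fun measurableSet_Ioo (fun α hα => hEq α hα)]
    rw [Measure.prod_apply hSmeas]
    have : ∫ α in Ioo (0:ℝ) 1, φ α =
        (∫⁻ α, ENNReal.ofReal (φ α) ∂ν).toReal := by
      rw [integral_eq_lintegral_of_nonneg_ae
        (Filter.Eventually.of_forall fun α => ENNReal.toReal_nonneg)
        hφmono.measurable.aestronglyMeasurable]
    rw [this]
    congr 1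
    refine lintegral_congr fun α => ?_
    rw [hφ]
    rw [ENNReal.ofReal_toReal (measure_ne_top P _)]
    rfl
  -- (ν.prod P) S = ∫⁻ ω, ofReal (F₀ (X₁ ω)) dP
  have step2 : (ν.prod P) S = ∫⁻ ω, ENNReal.ofReal (F₀ (X₁ ω)) ∂P := by
    rw [Measure.prod_apply_symm hSmeas]
    refine lintegral_congr fun ω => ?_
    have hpre : (fun α => (α, ω)) ⁻¹' S = Ioi (c ω) := rfl
    rw [hpre, hν, Measure.restrict_apply measurableSet_Ioi]
    have hc0 : 0 ≤ c ω := by simp only [hc]; linarith [hle1 (X₁ ω)]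
    have hc1 : c ω ≤ 1 := by simp only [hc]; linarith [hge0 (X₁ ω)]
    have hset : Ioi (c ω) ∩ Ioo (0:ℝ) 1 = Ioo (c ω) 1 := by
      ext x
      simp only [mem_inter_iff, mem_Ioi, mem_Ioo]
      exact ⟨fun ⟨h1, _, h3⟩ => ⟨h1, h3⟩, fun ⟨h1, h2⟩ => ⟨h1, lt_of_le_of_lt hc0 h1, h2⟩⟩
    rw [hset, Real.volume_Ioo]
    congr 1
    simp only [hc]
    ring
  -- RHS = ∫⁻ ω, ofReal (F₀ (X₁ ω)) dP
  have step3 : P {ω | X₀ ω ≤ X₁ ω} = ∫⁻ ω, ENNReal.ofReal (F₀ (X₁ ω)) ∂P := by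
    have hpair : Measurable fun ω => (X₀ ω, X₁ ω) := hX₀.prodMk hX₁
    have hle : MeasurableSet {p : ℝ × ℝ | p.1 ≤ p.2} :=
      measurableSet_le measurable_fst measurable_snd
    have h1 : P {ω | X₀ ω ≤ X₁ ω} = (P.map fun ω => (X₀ ω, X₁ ω)) {p | p.1 ≤ p.2} := by
      rw [Measure.map_apply hpair hle]; rfl
    rw [h1,
      (indepFun_iff_map_prod_eq_prod_map_map hX₀.aemeasurable hX₁.aemeasurable).mp hindep,
      Measure.prod_apply_symm hle]
    have hfun : (fun y : ℝ => (P.map X₀) ((fun x => (x, y)) ⁻¹' {p : ℝ × ℝ | p.1 ≤ p.2}))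
        = fun y => ENNReal.ofReal (F₀ y) := by
      funext y
      have hpre : ((fun x => (x, y)) ⁻¹' {p : ℝ × ℝ | p.1 ≤ p.2}) = Iic y := rfl
      rw [hpre, hmap₀, hF₀ y, ENNReal.ofReal_toReal (measure_ne_top P _)]
    rw [hfun, lintegral_map hF₀cont.measurable.ennreal_ofReal hX₁]
  rw [step1, step2, ← step3]
end
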